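/- arXiv:math/0302197 — 3 statements merged into one kernel-verified Lean document; each statement's English description precedes it below -/
import Mathlib

section
/- Let h > 0, ω ∈ ℝ, N ≥ 1, and let q : ℝ → (ℤ → ℂ) be a map, differentiable in t for each n, satisfying the discrete NLS equation i q̇_n = (1/h²)(q_{n+1} − 2q_n + q_{n−1}) + |q_n|²(q_{n+1} + q_{n−1}) − 2ω² q_n for all n and t. Then for every λ ∈ ℂ, setting z = exp(iλh), the Lax representation holds: for all n and t, d/dt L_n(t) = B_{n+1}(t) L_n(t) − L_n(t) B_n(t), where L_n and B_n are the 2×2 matrices of the discrete Lax pair. -/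
open Complex Matrix

/-- The spatial Lax matrix `L_n` of the discrete NLS equation. -/
noncomputable def LaxL (h : ℝ) (z : ℂ) (q : ℤ → ℂ) (n : ℤ) : Matrix (Fin 2) (Fin 2) ℂ :=
  !![z, Complex.I * h * q n;
     Complex.I * h * (starRingEnd ℂ (q n)), 1 / z]

/-- The temporal Lax matrix `B_n` of the discrete NLS equation. -/
noncomputable def LaxB (h ω : ℝ) (lam z : ℂ) (q : ℤ → ℂ) (n : ℤ) : Matrix (Fin 2) (Fin 2) ℂ :=
  (Complex.I / (h : ℂ) ^ 2) •
    !![1 - z ^ 2 + 2 * Complex.I * lam * h - h ^ 2 * q n * (starRingEnd ℂ (q (n - 1)))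
         + ω ^ 2 * h ^ 2,
       -Complex.I * z * h * q n + (1 / z) * Complex.I * h * q (n - 1);
       -Complex.I * z * h * (starRingEnd ℂ (q (n - 1))) + (1 / z) * Complex.I * h *
         (starRingEnd ℂ (q n)),
       1 / z ^ 2 - 1 + 2 * Complex.I * lam * h + h ^ 2 * (starRingEnd ℂ (q n)) * q (n - 1)
         - ω ^ 2 * h ^ 2]

set_option maxHeartbeats 1000000 in
/-- If `q` solves the discrete NLS equation, then for every `λ ∈ ℂ`,
with `z = exp(iλh)`, the Lax representation `d/dt L_n = B_{n+1} L_n - L_n B_n` holds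
(entrywise in `t`). -/
theorem lax_representation_of_DNLS
    (h ω : ℝ) (hh : 0 < h) (N : ℕ) (hN : 1 ≤ N)
    (q dq : ℝ → ℤ → ℂ)
    (hdiff : ∀ (n : ℤ) (t : ℝ), HasDerivAt (fun s => q s n) (dq t n) t)
    (hDNLS : ∀ (n : ℤ) (t : ℝ),
      Complex.I * dq t n =
        (1 / (h : ℂ) ^ 2) * (q t (n + 1) - 2 * q t n + q t (n - 1))
          + (‖q t n‖ : ℂ) ^ 2 * (q t (n + 1) + q t (n - 1))
          - 2 * (ω : ℂ) ^ 2 * q t n)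
    (lam : ℂ) (z : ℂ) (hz : z = Complex.exp (Complex.I * lam * h)) :
    ∀ (n : ℤ) (t : ℝ) (i j : Fin 2),
      HasDerivAt (fun s => LaxL h z (q s) n i j)
        ((LaxB h ω lam z (q t) (n + 1) * LaxL h z (q t) n
          - LaxL h z (q t) n * LaxB h ω lam z (q t) n) i j) t := by
  have hz0 : z ≠ 0 := by rw [hz]; exact Complex.exp_ne_zero _
  have hh0 : (h : ℂ) ≠ 0 := by exact_mod_cast hh.ne'
  intro n t i j
  have habs : ((‖q t n‖ : ℝ) : ℂ) ^ 2 = q t n * (starRingEnd ℂ (q t n)) := by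
    rw [Complex.mul_conj]; norm_cast; exact Complex.sq_norm _
  have hq : dq t n =
      -Complex.I * ((1 / (h : ℂ) ^ 2) * (q t (n + 1) - 2 * q t n + q t (n - 1))
        + (q t n * starRingEnd ℂ (q t n)) * (q t (n + 1) + q t (n - 1))
        - 2 * (ω : ℂ) ^ 2 * q t n) := by
    have h1 := hDNLS n t
    rw [habs] at h1
    linear_combination -Complex.I * h1 + dq t n * Complex.I_sq
  have hqc := congrArg (starRingEnd ℂ) hq
  simp only [_root_.map_mul, _root_.map_add, _root_.map_sub, map_neg, map_div₀, _root_.map_one,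
    map_pow, map_ofNat, Complex.conj_I, Complex.conj_conj, Complex.conj_ofReal] at hqc
  have hqc2 : (star (dq t n) : ℂ) = _ := hqc
  fin_cases i <;> fin_cases j <;>
    simp only [LaxL, LaxB, Matrix.sub_apply, Matrix.mul_apply, Fin.sum_univ_two,
      Matrix.smul_apply, Matrix.cons_val', Matrix.cons_val_zero, Matrix.cons_val_one,
      Matrix.head_cons, Matrix.head_fin_const, Matrix.empty_val', Matrix.cons_val_fin_one,
      smul_eq_mul, Matrix.of_apply, add_sub_cancel_right, Fin.mk_zero, Fin.mk_one, Fin.isValue]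
  · convert hasDerivAt_const t z using 1
    case e'_4 => rfl
    field_simp [hz0, hh0]
    linear_combination (Complex.I * z ^ 2 * (h : ℂ) ^ 2 *
      (q t n * starRingEnd ℂ (q t (n - 1)) - q t (n + 1) * starRingEnd ℂ (q t n))) *
      Complex.I_sq
  · convert (hdiff n t).const_mul (Complex.I * (h : ℂ)) using 1
    case e'_4 => rfl
    rw [hq]
    field_simp [hz0, hh0]
    ring
  · convert ((hdiff n t).star.const_mul (Complex.I * (h : ℂ))) using 1
    case e'_4 => rfl
    · rfl
    rw [hqc2]
    field_simp [hz0, hh0]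
    ring
  · convert hasDerivAt_const t (1 / z) using 1
    case e'_4 => rfl
    field_simp [hz0, hh0]
    linear_combination (Complex.I * z ^ 2 * (h : ℂ) ^ 2 *
      (starRingEnd ℂ (q t (n + 1)) * q t n - starRingEnd ℂ (q t n) * q t (n - 1))) *
      Complex.I_sq
end

section
/- Let N ≥ 1, let L_n (n ∈ ℤ) be 2×2 complex matrices periodic with period N, and let ψ⁺, ψ⁻ : ℤ → ℂ² solve ψ_{n+1} = L_n ψ_n with ψ±_{n+N} = D ζ^{±1} ψ±_n for nonzero D, ζ ∈ ℂ. Let B_n = (ψ⁺_n, ψ⁻_n), assume B_0 and B_{n+1} are invertible, and set M_n = B_n B_0^{−1}, M_N = B_0 diag(Dζ, Dζ^{−1}) B_0^{−1}, and W_{n+1} = det B_{n+1}. Then trace( M_{n+1}^{−1} · [[0,1],[0,0]] · M_n · M_N ) = (D / W_{n+1}) · ( ζ · ψ^{(−,2)}_{n+1} ψ^{(+,2)}_n − ζ^{−1} · ψ^{(+,2)}_{n+1} ψ^{(−,2)}_n ), where ψ±_n = (ψ^{(±,1)}_n, ψ^{(±,2)}_n). -/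
open Matrix

/-- Trace identity in terms of Bloch functions: with
`M_n = B_n B_0⁻¹`, `M_N = B_0 diag(Dζ, Dζ⁻¹) B_0⁻¹`, and `W_{n+1} = det B_{n+1}`,
`trace(M_{n+1}⁻¹ E₁₂ M_n M_N)
  = (D/W_{n+1})(ζ ψ^{(-,2)}_{n+1} ψ^{(+,2)}_n - ζ⁻¹ ψ^{(+,2)}_{n+1} ψ^{(-,2)}_n)`. -/
theorem trace_identity_bloch
    (N : ℕ) (hN : 1 ≤ N)
    (L : ℤ → Matrix (Fin 2) (Fin 2) ℂ)
    (hLper : ∀ n : ℤ, L (n + N) = L n)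
    (ψp ψm : ℤ → Fin 2 → ℂ)
    (hψp : ∀ n : ℤ, ψp (n + 1) = (L n).mulVec (ψp n))
    (hψm : ∀ n : ℤ, ψm (n + 1) = (L n).mulVec (ψm n))
    (D ζ : ℂ) (hD : D ≠ 0) (hζ : ζ ≠ 0)
    (hblochp : ∀ n : ℤ, ψp (n + N) = (D * ζ) • ψp n)
    (hblochm : ∀ n : ℤ, ψm (n + N) = (D * ζ⁻¹) • ψm n)
    (B : ℤ → Matrix (Fin 2) (Fin 2) ℂ)
    (hB : ∀ n : ℤ, B n = !![ψp n 0, ψm n 0; ψp n 1, ψm n 1])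
    (n : ℤ)
    (hB0 : IsUnit (B 0)) (hBn1 : IsUnit (B (n + 1))) :
    Matrix.trace
      ((B (n + 1) * (B 0)⁻¹)⁻¹ * !![(0 : ℂ), 1; 0, 0] * (B n * (B 0)⁻¹) *
        (B 0 * Matrix.diagonal ![D * ζ, D * ζ⁻¹] * (B 0)⁻¹)) =
    (D / (B (n + 1)).det) *
      (ζ * ψm (n + 1) 1 * ψp n 1 - ζ⁻¹ * ψp (n + 1) 1 * ψm n 1) := by
  have hdet0 : IsUnit (B 0).det := (Matrix.isUnit_iff_isUnit_det _).mp hB0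
  have hdet1 : IsUnit (B (n+1)).det := (Matrix.isUnit_iff_isUnit_det _).mp hBn1
  have hdet1' : (B (n+1)).det ≠ 0 := hdet1.ne_zero
  have hinv0 : (B 0)⁻¹ * B 0 = 1 := Matrix.nonsing_inv_mul _ hdet0
  have h1 : (B (n + 1) * (B 0)⁻¹)⁻¹ = B 0 * (B (n+1))⁻¹ := by
    rw [Matrix.mul_inv_rev, Matrix.nonsing_inv_nonsing_inv _ hdet0]
  rw [h1]
  have h2 : B 0 * (B (n+1))⁻¹ * !![(0 : ℂ), 1; 0, 0] * (B n * (B 0)⁻¹) *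
      (B 0 * Matrix.diagonal ![D * ζ, D * ζ⁻¹] * (B 0)⁻¹)
      = B 0 * ((B (n+1))⁻¹ * !![(0 : ℂ), 1; 0, 0] * B n *
          Matrix.diagonal ![D * ζ, D * ζ⁻¹]) * (B 0)⁻¹ := by
    simp only [Matrix.mul_assoc, Matrix.nonsing_inv_mul_cancel_left _ _ hdet0]
  rw [h2, Matrix.trace_mul_cycle, ← Matrix.mul_assoc, hinv0, Matrix.one_mul]
  rw [Matrix.inv_def, Ring.inverse_eq_inv']
  have hadj : (B (n+1)).adjugate =
      !![ψm (n+1) 1, -(ψm (n+1) 0); -(ψp (n+1) 1), ψp (n+1) 0] := by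
    rw [hB]; simp [Matrix.adjugate_fin_two]
  rw [hadj, hB n]
  rw [Matrix.smul_mul, Matrix.smul_mul, Matrix.smul_mul, Matrix.trace_smul]
  have hd : (Matrix.diagonal ![D * ζ, D * ζ⁻¹] : Matrix (Fin 2) (Fin 2) ℂ)
      = !![D * ζ, 0; 0, D * ζ⁻¹] := by
    ext i j; fin_cases i <;> fin_cases j <;> simp [Matrix.diagonal]
  rw [hd]
  simp only [Matrix.mul_fin_two, Matrix.trace_fin_two_of, smul_eq_mul]
  field_simp
  ring
end

section
/- Let N ≥ 3, h = 1/N, β = π/N, a > N·tan(π/N), ρ = 1 + h²a² (so that ρ cos²β > 1), ω ∈ ℝ, γ ∈ ℝ, p ∈ ℝ, and let φ ∈ (0, π/2) be defined by sin φ = √ρ·sin β/(h a). Set μ = 2 h^{−2} √ρ sin β √(ρ cos²β − 1) > 0, q_c(t) = a·exp(−i[2(a²−ω²)t − γ]), Γ(t) = 1 − cos 2φ − i sin 2φ · tanh(2μt + 2p), and Λ_n(t) = 1 + (cos φ / cos β)·sech(2μt + 2p)·cos(2nβ), and define the heteroclinic orbit Q_n(t) = q_c(t)·( Γ(t)/Λ_n(t)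 − 1 ). Then for each n, Q_n(t) − e^{i(π+2φ)} q_c(t) → 0 as t → +∞ and Q_n(t) − e^{i(π−2φ)} q_c(t) → 0 as t → −∞; that is, Q_n is homoclinic to the uniform solution q_c with phase shifts θ_± = π ± 2φ. -/
open Real Filter

lemma tanh_formula (x : ℝ) :
    Real.tanh x = (1 - Real.exp (-(2*x))) / (1 + Real.exp (-(2*x))) := by
  rw [Real.tanh_eq_sinh_div_cosh, Real.sinh_eq, Real.cosh_eq,
    show -(2*x) = -x + -x by ring, Real.exp_add]
  have h1 : Real.exp x ≠ 0 := (Real.exp_pos x).ne'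
  have h2 : 0 < 1 + Real.exp (-x) * Real.exp (-x) := by positivity
  have h3 : 0 < Real.exp x + Real.exp (-x) := by positivity
  rw [Real.exp_neg]
  field_simp


lemma tanh_tendsto_atTop : Tendsto Real.tanh atTop (nhds 1) := by
  have hu : Tendsto (fun x : ℝ => Real.exp (-(2*x))) atTop (nhds 0) := by
    apply Real.tendsto_exp_atBot.comp
    apply tendsto_neg_atBot_iff.mpr
    exact (tendsto_id (α := ℝ)).const_mul_atTop two_pos
  have h : Tendsto (fun x : ℝ => (1 - Real.exp (-(2*x))) / (1 + Real.exp (-(2*x))))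
      atTop (nhds ((1 - 0) / (1 + 0))) :=
    (tendsto_const_nhds.sub hu).div (tendsto_const_nhds.add hu) (by norm_num)
  exact Tendsto.congr (fun x => (tanh_formula x).symm) (by simpa using h)

lemma tanh_tendsto_atBot : Tendsto Real.tanh atBot (nhds (-1)) := by
  have : Tendsto (fun x : ℝ => -Real.tanh (-x)) atBot (nhds (-1)) :=
    ((tanh_tendsto_atTop.comp tendsto_neg_atBot_atTop).neg)
  simpa [Real.tanh_neg] using this

lemma cosh_tendsto_atTop : Tendsto Real.cosh atTop atTop := by
  apply tendsto_atTop_mono (f := fun x => Real.exp x / 2)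
  · intro x
    rw [Real.cosh_eq]
    have := (Real.exp_pos (-x)).le
    linarith
  · exact Real.tendsto_exp_atTop.atTop_div_const two_pos

lemma cosh_tendsto_atBot : Tendsto Real.cosh atBot atTop := by
  have := cosh_tendsto_atTop.comp tendsto_neg_atBot_atTop
  exact this.congr fun x => Real.cosh_neg x


/-- The heteroclinic orbit `Q_n(t) = q_c(t)(Γ(t)/Λ_n(t) - 1)` produced
by the Bäcklund–Darboux transformation is homoclinic to the uniform solution `q_c`:
`Q_n(t) - e^{i(π+2φ)} q_c(t) → 0` as `t → +∞` and
`Q_n(t) - e^{i(π-2φ)} q_c(t) → 0` as `t → -∞`. -/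
theorem heteroclinic_orbit_asymptotics
    (N : ℕ) (hN : 3 ≤ N) (a ω γ p : ℝ)
    (h β ρ μ φ : ℝ)
    (hh : h = 1 / N) (hβ : β = Real.pi / N)
    (ha : a > N * Real.tan (Real.pi / N))
    (hρ : ρ = 1 + h ^ 2 * a ^ 2)
    (hcond : ρ * Real.cos β ^ 2 > 1)
    (hφmem : φ ∈ Set.Ioo 0 (Real.pi / 2))
    (hφ : Real.sin φ = Real.sqrt ρ * Real.sin β / (h * a))
    (hμ : μ = 2 / h ^ 2 * Real.sqrt ρ * Real.sin β * Real.sqrt (ρ * Real.cos β ^ 2 - 1)) :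
    let qc : ℝ → ℂ := fun t =>
      (a : ℂ) * Complex.exp (-Complex.I * (2 * ((a : ℂ) ^ 2 - (ω : ℂ) ^ 2) * t - γ))
    let Γ : ℝ → ℂ := fun t =>
      1 - (Real.cos (2 * φ) : ℂ) -
        Complex.I * (Real.sin (2 * φ) : ℂ) * (Real.tanh (2 * μ * t + 2 * p) : ℂ)
    let Λ : ℤ → ℝ → ℝ := fun n t =>
      1 + (Real.cos φ / Real.cos β) * (1 / Real.cosh (2 * μ * t + 2 * p)) *
        Real.cos (2 * n * β)
    let Q : ℤ → ℝ → ℂ := fun n t => qc t * (Γ t / (Λ n t : ℂ) - 1)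
    0 < μ ∧
    ∀ n : ℤ,
      Filter.Tendsto
        (fun t => Q n t - Complex.exp (Complex.I * (Real.pi + 2 * φ)) * qc t)
        Filter.atTop (nhds 0) ∧
      Filter.Tendsto
        (fun t => Q n t - Complex.exp (Complex.I * (Real.pi - 2 * φ)) * qc t)
        Filter.atBot (nhds 0) := by
  intro qc Γ Λ Q
  -- positivity facts
  have hN3 : (3:ℝ) ≤ N := by exact_mod_cast hN
  have hN0 : (0:ℝ) < N := by linarith
  have hh0 : 0 < h := by rw [hh]; positivity
  have hβ0 : 0 < β := by rw [hβ]; positivity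
  have hβπ : β < Real.pi := by
    rw [hβ]
    have h1 : (1:ℝ) < N := by linarith
    calc Real.pi / N < Real.pi / 1 := div_lt_div_of_pos_left Real.pi_pos one_pos h1
      _ = Real.pi := by ring
  have hsinβ : 0 < Real.sin β := Real.sin_pos_of_pos_of_lt_pi hβ0 hβπ
  have hρ0 : 0 < ρ := by rw [hρ]; positivity
  have hμ0 : 0 < μ := by
    rw [hμ]
    have h1 : 0 < Real.sqrt ρ := Real.sqrt_pos.mpr hρ0
    have h2 : 0 < Real.sqrt (ρ * Real.cos β ^ 2 - 1) := Real.sqrt_pos.mpr (by linarith)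
    positivity
  refine ⟨hμ0, fun n => ?_⟩
  -- the argument tends to ±∞
  have hargTop : Tendsto (fun t : ℝ => 2 * μ * t + 2 * p) atTop atTop := by
    apply tendsto_atTop_add_const_right
    exact (tendsto_id (α := ℝ)).const_mul_atTop (by positivity)
  have hargBot : Tendsto (fun t : ℝ => 2 * μ * t + 2 * p) atBot atBot := by
    apply tendsto_atBot_add_const_right
    exact (tendsto_id (α := ℝ)).const_mul_atBot (by positivity)
  -- sech → 0 at both ends
  have hsechTop : Tendsto (fun t : ℝ => 1 / Real.cosh (2 * μ * t + 2 * p)) atTop (nhds 0) := by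
    simp only [one_div]
    exact (cosh_tendsto_atTop.comp hargTop).inv_tendsto_atTop
  have hsechBot : Tendsto (fun t : ℝ => 1 / Real.cosh (2 * μ * t + 2 * p)) atBot (nhds 0) := by
    simp only [one_div]
    exact (cosh_tendsto_atBot.comp hargBot).inv_tendsto_atTop
  -- Λ → 1 at both ends
  have hΛTop : Tendsto (fun t => ((Λ n t : ℝ) : ℂ)) atTop (nhds 1) := by
    have : Tendsto (fun t => Λ n t) atTop (nhds 1) := by
      have := ((hsechTop.const_mul (Real.cos φ / Real.cos β)).mul_const
        (Real.cos (2 * n * β))).const_add 1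
      simpa [Λ, mul_assoc] using this
    have := (Complex.continuous_ofReal.tendsto 1).comp this
    simpa [Function.comp_def] using this
  have hΛBot : Tendsto (fun t => ((Λ n t : ℝ) : ℂ)) atBot (nhds 1) := by
    have : Tendsto (fun t => Λ n t) atBot (nhds 1) := by
      have := ((hsechBot.const_mul (Real.cos φ / Real.cos β)).mul_const
        (Real.cos (2 * n * β))).const_add 1
      simpa [Λ, mul_assoc] using this
    have := (Complex.continuous_ofReal.tendsto 1).comp this
    simpa [Function.comp_def] using this
  -- Γ limits
  have htanhTop : Tendsto (fun t : ℝ => ((Real.tanh (2 * μ * t + 2 * p) : ℝ) : ℂ))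
      atTop (nhds 1) := by
    have := (Complex.continuous_ofReal.tendsto 1).comp (tanh_tendsto_atTop.comp hargTop)
    simpa only [Function.comp_def, Complex.ofReal_one] using this
  have htanhBot : Tendsto (fun t : ℝ => ((Real.tanh (2 * μ * t + 2 * p) : ℝ) : ℂ))
      atBot (nhds (-1)) := by
    have := (Complex.continuous_ofReal.tendsto (-1)).comp (tanh_tendsto_atBot.comp hargBot)
    simpa only [Function.comp_def, Complex.ofReal_neg, Complex.ofReal_one] using this
  have hΓTop : Tendsto Γ atTop
      (nhds (1 - (Real.cos (2 * φ) : ℂ) - Complex.I * (Real.sin (2 * φ) : ℂ) * 1)) :=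
    tendsto_const_nhds.sub (tendsto_const_nhds.mul htanhTop)
  have hΓBot : Tendsto Γ atBot
      (nhds (1 - (Real.cos (2 * φ) : ℂ) - Complex.I * (Real.sin (2 * φ) : ℂ) * (-1))) :=
    tendsto_const_nhds.sub (tendsto_const_nhds.mul htanhBot)
  -- phase values
  have hETop : Complex.exp (Complex.I * (Real.pi + 2 * φ)) =
      -(Real.cos (2 * φ) : ℂ) - Complex.I * (Real.sin (2 * φ) : ℂ) := by
    rw [show Complex.I * ((Real.pi : ℂ) + 2 * (φ : ℂ)) =
      ((Real.pi + 2 * φ : ℝ) : ℂ) * Complex.I by push_cast; ring, Complex.exp_mul_I,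
      ← Complex.ofReal_cos, ← Complex.ofReal_sin,
      Real.cos_add, Real.sin_add, Real.cos_pi, Real.sin_pi]
    push_cast
    ring
  have hEBot : Complex.exp (Complex.I * (Real.pi - 2 * φ)) =
      -(Real.cos (2 * φ) : ℂ) + Complex.I * (Real.sin (2 * φ) : ℂ) := by
    rw [show Complex.I * ((Real.pi : ℂ) - 2 * (φ : ℂ)) =
      ((Real.pi - 2 * φ : ℝ) : ℂ) * Complex.I by push_cast; ring, Complex.exp_mul_I,
      ← Complex.ofReal_cos, ← Complex.ofReal_sin,
      Real.cos_sub, Real.sin_sub, Real.cos_pi, Real.sin_pi]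
    push_cast
    ring
  -- norm bound for qc
  have hqc : ∀ t : ℝ, ‖qc t‖ = |a| := by
    intro t
    have e : qc t = (a : ℂ) *
        Complex.exp (((γ - 2 * (a ^ 2 - ω ^ 2) * t : ℝ) : ℂ) * Complex.I) := by
      simp only [qc]
      congr 1
      push_cast
      ring
    rw [e, norm_mul, Complex.norm_real, Real.norm_eq_abs,
      Complex.norm_exp_ofReal_mul_I, mul_one]
  constructor
  · -- atTop
    have hf : Tendsto (fun t => Γ t / (Λ n t : ℂ) - 1 -
        Complex.exp (Complex.I * (Real.pi + 2 * φ))) atTop (nhds 0) := by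
      have := ((hΓTop.div hΛTop one_ne_zero).sub_const 1).sub_const
        (Complex.exp (Complex.I * (Real.pi + 2 * φ)))
      have hz : (1 - (Real.cos (2 * φ) : ℂ) - Complex.I * (Real.sin (2 * φ) : ℂ) * 1) / 1
          - 1 - Complex.exp (Complex.I * (Real.pi + 2 * φ)) = 0 := by
        rw [hETop]; ring
      rwa [hz] at this
    have hg : Tendsto (fun t => |a| * ‖Γ t / (Λ n t : ℂ) - 1 -
        Complex.exp (Complex.I * (Real.pi + 2 * φ))‖) atTop (nhds 0) := by
      simpa using hf.norm.const_mul |a|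
    refine squeeze_zero_norm (fun t => ?_) hg
    have heq : Q n t - Complex.exp (Complex.I * (Real.pi + 2 * φ)) * qc t =
        qc t * (Γ t / (Λ n t : ℂ) - 1 - Complex.exp (Complex.I * (Real.pi + 2 * φ))) := by
      simp only [Q]; ring
    rw [heq, norm_mul, hqc]
  · -- atBot
    have hf : Tendsto (fun t => Γ t / (Λ n t : ℂ) - 1 -
        Complex.exp (Complex.I * (Real.pi - 2 * φ))) atBot (nhds 0) := by
      have := ((hΓBot.div hΛBot one_ne_zero).sub_const 1).sub_const
        (Complex.exp (Complex.I * (Real.pi - 2 * φ)))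
      have hz : (1 - (Real.cos (2 * φ) : ℂ) - Complex.I * (Real.sin (2 * φ) : ℂ) * (-1)) / 1
          - 1 - Complex.exp (Complex.I * (Real.pi - 2 * φ)) = 0 := by
        rw [hEBot]; ring
      rwa [hz] at this
    have hg : Tendsto (fun t => |a| * ‖Γ t / (Λ n t : ℂ) - 1 -
        Complex.exp (Complex.I * (Real.pi - 2 * φ))‖) atBot (nhds 0) := by
      simpa using hf.norm.const_mul |a|
    refine squeeze_zero_norm (fun t => ?_) hg
    have heq : Q n t - Complex.exp (Complex.I * (Real.pi - 2 * φ)) * qc t =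
        qc t * (Γ t / (Λ n t : ℂ) - 1 - Complex.exp (Complex.I * (Real.pi - 2 * φ))) := by
      simp only [Q]; ring
    rw [heq, norm_mul, hqc]
end
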